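/- Let 0 < p < 1 and fix ε > 0 with p = 1 − ε/2. Let l be a constant integer with l ≥ 8/(ε ln(1/p)). Then the probability that G(n, m) with m = p·C(n,2) contains a complete bipartite subgraph with parts of sizes l and (ε/8)n is at most n^l · 2^n · p^{(ε/8)n·l}, which tends to 0 as n → ∞. -/

import Mathlib

/-- The edges of the complete graph `K_n`: non-diagonal elements of `Sym2 (Fin n)`. -/
def knBoard (n : ℕ) : Finset (Sym2 (Fin n)) :=
  Finset.univ.filter fun e : Sym2 (Fin n) => ¬ e.IsDiag


lemma aux_descFact' {m N : ℕ} (h : m ≤ N) (k : ℕ) :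
    m.descFactorial k * N ^ k ≤ N.descFactorial k * m ^ k := by
  induction k with
  | zero => simp
  | succ k ih =>
    rw [Nat.descFactorial_succ, Nat.descFactorial_succ, pow_succ, pow_succ]
    have h1 : (m - k) * N ≤ (N - k) * m := by
      rw [Nat.sub_mul, Nat.sub_mul]
      calc m * N - k * N ≤ m * N - k * m :=
            Nat.sub_le_sub_left (Nat.mul_le_mul_left k h) _
        _ = N * m - k * m := by rw [Nat.mul_comm]
    calc (m - k) * m.descFactorial k * (N ^ k * N)
        = ((m - k) * N) * (m.descFactorial k * N ^ k) := by ring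
      _ ≤ ((N - k) * m) * (N.descFactorial k * m ^ k) := Nat.mul_le_mul h1 ih
      _ = (N - k) * N.descFactorial k * (m ^ k * m) := by ring

lemma aux_choose_pow {m N : ℕ} (h : m ≤ N) (k : ℕ) :
    m.choose k * N ^ k ≤ N.choose k * m ^ k := by
  have h2 := aux_descFact' h k
  rw [Nat.descFactorial_eq_factorial_mul_choose, Nat.descFactorial_eq_factorial_mul_choose,
    Nat.mul_assoc, Nat.mul_assoc] at h2
  exact Nat.le_of_mul_le_mul_left h2 (Nat.factorial_pos k)

lemma aux_choose_two_pow (n k : ℕ) : n.choose k ≤ 2 ^ n := by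
  rcases le_or_gt k n with h | h
  · rw [← Nat.sum_range_choose n]
    exact Finset.single_le_sum (f := fun i => n.choose i) (fun i _ => Nat.zero_le _)
      (Finset.mem_range.2 (Nat.lt_succ_of_le h))
  · simp [Nat.choose_eq_zero_of_lt h]

lemma aux_ratio {N mm k : ℕ} (p : ℝ) (hp0 : 0 < p) (hp1 : p ≤ 1)
    (hm : (mm : ℝ) ≤ p * N) (hk : k ≤ mm) :
    ((N - k).choose (mm - k) : ℝ) ≤ p ^ k * (N.choose mm : ℝ) := by
  rcases Nat.eq_zero_or_pos N with hN | hN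
  · subst hN
    have : (mm : ℝ) ≤ 0 := by simpa using hm
    have hmm : mm = 0 := by exact_mod_cast le_antisymm this (by positivity)
    subst hmm
    interval_cases k
    simp
  · have hmN : mm ≤ N := by
      have : (mm : ℝ) ≤ (N : ℝ) := hm.trans (by nlinarith [Nat.cast_nonneg (α := ℝ) N])
      exact_mod_cast this
    have hkN : k ≤ N := hk.trans hmN
    have hNpos : (0 : ℝ) < (N : ℝ) ^ k := by positivity
    have c1 : (mm.choose k : ℝ) ≤ p ^ k * (N.choose k : ℝ) := by
      have h1 : (mm.choose k : ℝ) * (N : ℝ) ^ k ≤ (N.choose k : ℝ) * (mm : ℝ) ^ k := by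
        exact_mod_cast aux_choose_pow hmN k
      have h2 : (mm : ℝ) ^ k ≤ (p * N) ^ k :=
        pow_le_pow_left₀ (Nat.cast_nonneg mm) hm k
      have h3 : (mm.choose k : ℝ) * (N : ℝ) ^ k ≤ p ^ k * (N.choose k : ℝ) * (N : ℝ) ^ k := by
        calc (mm.choose k : ℝ) * (N : ℝ) ^ k ≤ (N.choose k : ℝ) * (mm : ℝ) ^ k := h1
          _ ≤ (N.choose k : ℝ) * (p * N) ^ k := by
              exact mul_le_mul_of_nonneg_left h2 (Nat.cast_nonneg _)
          _ = p ^ k * (N.choose k : ℝ) * (N : ℝ) ^ k := by rw [mul_pow]; ring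
      exact le_of_mul_le_mul_right h3 hNpos
    have hid : N.choose mm * mm.choose k = N.choose k * (N - k).choose (mm - k) :=
      Nat.choose_mul (n := N) hk
    have hck : (0 : ℝ) < (N.choose k : ℝ) := by
      exact_mod_cast Nat.choose_pos hkN
    have : ((N - k).choose (mm - k) : ℝ) * (N.choose k : ℝ)
        ≤ p ^ k * (N.choose mm : ℝ) * (N.choose k : ℝ) := by
      calc ((N - k).choose (mm - k) : ℝ) * (N.choose k : ℝ)
          = (N.choose mm : ℝ) * (mm.choose k : ℝ) := by
            rw [mul_comm]; exact_mod_cast congrArg (Nat.cast (R := ℝ)) hid |>.symm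
        _ ≤ (N.choose mm : ℝ) * (p ^ k * (N.choose k : ℝ)) :=
            mul_le_mul_of_nonneg_left c1 (Nat.cast_nonneg _)
        _ = p ^ k * (N.choose mm : ℝ) * (N.choose k : ℝ) := by ring
    exact le_of_mul_le_mul_right this hck

lemma aux_count {α : Type*} [DecidableEq α] (board T : Finset α) (mm : ℕ) (hT : T ⊆ board) :
    ((board.powersetCard mm).filter (fun E => T ⊆ E)).card
      ≤ (board.card - T.card).choose (mm - T.card) := by
  classical
  have h1 : ((board.powersetCard mm).filter (fun E => T ⊆ E)).card
      ≤ ((board \ T).powersetCard (mm - T.card)).card := by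
    apply Finset.card_le_card_of_injOn (fun E => E \ T)
    · intro E hE
      rw [Finset.mem_coe, Finset.mem_filter, Finset.mem_powersetCard] at hE
      obtain ⟨⟨hEb, hEc⟩, hTE⟩ := hE
      rw [Finset.mem_coe, Finset.mem_powersetCard]
      exact ⟨Finset.sdiff_subset_sdiff hEb le_rfl, by rw [Finset.card_sdiff_of_subset hTE, hEc]⟩
    · intro E1 h1 E2 h2 heq
      rw [Finset.coe_filter, Set.mem_setOf_eq] at h1 h2
      have e1 : E1 = E1 \ T ∪ T := (Finset.sdiff_union_of_subset h1.2).symm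
      have e2 : E2 = E2 \ T ∪ T := (Finset.sdiff_union_of_subset h2.2).symm
      simp only at heq
      rw [e1, e2, heq]
  calc _ ≤ _ := h1
    _ = (board.card - T.card).choose (mm - T.card) := by
        rw [Finset.card_powersetCard, Finset.card_sdiff_of_subset hT]

/-- for `p = 1 - ε/2` and a constant integer `l ≥ 8/(ε ln(1/p))`, the probability
that `G(n,m)` with `m = p·C(n,2)` contains a complete bipartite subgraph with parts of sizes
`l` and `(ε/8)n` is at most `n^l · 2^n · p^{(ε/8)n·l}`, which tends to `0` as `n → ∞`. -/
theorem stmt_4 (ε : ℝ) (hε : 0 < ε) (hε2 : ε < 2) (p : ℝ) (hp : p = 1 - ε / 2)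
    (l : ℕ) (hl : 8 / (ε * Real.log (1 / p)) ≤ (l : ℝ))
    (m q : ℕ → ℕ)
    (hm : ∀ n, (m n : ℝ) ≤ p * (n.choose 2 : ℝ))
    (hq : ∀ n, q n = ⌈ε / 8 * (n : ℝ)⌉₊) :
    (∀ n : ℕ,
      (Nat.card {E : Finset (Sym2 (Fin n)) //
          E ∈ (knBoard n).powersetCard (m n) ∧
          ∃ A B : Finset (Fin n), Disjoint A B ∧ A.card = l ∧ B.card = q n ∧
            ∀ a ∈ A, ∀ b ∈ B, s(a, b) ∈ E} : ℝ) /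
        ((knBoard n).powersetCard (m n)).card
      ≤ (n : ℝ) ^ l * 2 ^ n * p ^ (ε / 8 * (n : ℝ) * (l : ℝ))) ∧
    Filter.Tendsto
      (fun n : ℕ => (n : ℝ) ^ l * 2 ^ n * p ^ (ε / 8 * (n : ℝ) * (l : ℝ)))
      Filter.atTop (nhds 0) := by
  have hp0 : 0 < p := by rw [hp]; linarith
  have hp1 : p < 1 := by rw [hp]; linarith
  have hL : 0 < Real.log (1 / p) := Real.log_pos (by rw [one_lt_div hp0]; exact hp1)
  have hcL : (1 : ℝ) ≤ ε / 8 * l * Real.log (1 / p) := by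
    have h8 : 8 ≤ (l : ℝ) * (ε * Real.log (1 / p)) :=
      (div_le_iff₀ (by positivity)).1 hl
    nlinarith
  constructor
  · intro n
    classical
    set N := n.choose 2 with hN
    set k := l * q n with hk
    have hboard : (knBoard n).card = N := by
      rw [knBoard, ← Fintype.card_subtype, Sym2.card_subtype_not_diag, Fintype.card_fin]
    have hmn : m n ≤ N := by
      have h1 : (m n : ℝ) ≤ (N : ℝ) := (hm n).trans
        (by nlinarith [Nat.cast_nonneg (α := ℝ) N])
      exact_mod_cast h1
    have hdenom : ((knBoard n).powersetCard (m n)).card = N.choose (m n) := by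
      rw [Finset.card_powersetCard, hboard]
    have hdpos : (0 : ℝ) < (N.choose (m n) : ℝ) := by
      exact_mod_cast Nat.choose_pos hmn
    set P : Finset (Sym2 (Fin n)) → Prop := fun E =>
      E ∈ (knBoard n).powersetCard (m n) ∧
        ∃ A B : Finset (Fin n), Disjoint A B ∧ A.card = l ∧ B.card = q n ∧
          ∀ a ∈ A, ∀ b ∈ B, s(a, b) ∈ E with hP
    have hnum : Nat.card {E : Finset (Sym2 (Fin n)) // P E}
        = (Finset.univ.filter P).card := by
      rw [Nat.card_eq_fintype_card, Fintype.card_subtype]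
    set pairs : Finset (Finset (Fin n) × Finset (Fin n)) :=
      ((Finset.univ.powersetCard l) ×ˢ (Finset.univ.powersetCard (q n))).filter
        (fun AB => Disjoint AB.1 AB.2) with hpairs
    set Tset : Finset (Fin n) → Finset (Fin n) → Finset (Sym2 (Fin n)) :=
      fun A B => (A ×ˢ B).image fun x => s(x.1, x.2) with hTset
    have hsub : Finset.univ.filter P ⊆ pairs.biUnion
        (fun AB => ((knBoard n).powersetCard (m n)).filter
          (fun E => Tset AB.1 AB.2 ⊆ E)) := by
      intro E hE
      rw [Finset.mem_filter] at hE
      obtain ⟨-, hEp, A, B, hdis, hA, hB, hall⟩ := hE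
      rw [Finset.mem_biUnion]
      refine ⟨(A, B), ?_, ?_⟩
      · rw [hpairs, Finset.mem_filter, Finset.mem_product,
          Finset.mem_powersetCard, Finset.mem_powersetCard]
        exact ⟨⟨⟨Finset.subset_univ _, hA⟩, ⟨Finset.subset_univ _, hB⟩⟩, hdis⟩
      · rw [Finset.mem_filter]
        refine ⟨hEp, ?_⟩
        intro t ht
        rw [hTset] at ht
        simp only [Finset.mem_image, Finset.mem_product] at ht
        obtain ⟨⟨a, b⟩, ⟨ha, hb⟩, rfl⟩ := ht
        exact hall a ha b hb
    have hperpair : ∀ AB ∈ pairs,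
        ((((knBoard n).powersetCard (m n)).filter
          (fun E => Tset AB.1 AB.2 ⊆ E)).card : ℝ)
          ≤ p ^ k * (N.choose (m n) : ℝ) := by
      rintro ⟨A, B⟩ hAB
      rw [hpairs, Finset.mem_filter, Finset.mem_product,
        Finset.mem_powersetCard, Finset.mem_powersetCard] at hAB
      obtain ⟨⟨⟨-, hA⟩, ⟨-, hB⟩⟩, hdis⟩ := hAB
      have hTcard : (Tset A B).card = k := by
        rw [hTset]
        rw [Finset.card_image_of_injOn, Finset.card_product, hA, hB]
        intro x hx y hy hxy
        simp only [Finset.mem_coe, Finset.mem_product] at hx hy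
        simp only [Sym2.eq_iff] at hxy
        rcases hxy with ⟨h1, h2⟩ | ⟨h1, h2⟩
        · exact Prod.ext h1 h2
        · exact ((Finset.disjoint_left.1 hdis hx.1) (h1 ▸ hy.2)).elim
      have hTboard : Tset A B ⊆ knBoard n := by
        intro t ht
        rw [hTset] at ht
        simp only [Finset.mem_image, Finset.mem_product] at ht
        obtain ⟨⟨a, b⟩, ⟨ha, hb⟩, rfl⟩ := ht
        rw [knBoard, Finset.mem_filter]
        refine ⟨Finset.mem_univ _, ?_⟩
        rw [Sym2.mk_isDiag_iff]
        intro hab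
        exact Finset.disjoint_left.1 hdis ha (hab ▸ hb)
      rcases le_or_gt k (m n) with hkm | hkm
      · have h1 := aux_count (knBoard n) (Tset A B) (m n) hTboard
        rw [hTcard, hboard] at h1
        calc ((((knBoard n).powersetCard (m n)).filter
              (fun E => Tset (A, B).1 (A, B).2 ⊆ E)).card : ℝ)
            ≤ ((N - k).choose (m n - k) : ℝ) := by exact_mod_cast h1
          _ ≤ p ^ k * (N.choose (m n) : ℝ) := by
              apply aux_ratio p hp0 hp1.le _ hkm
              rw [hN]; exact hm n
      · have hempty : (((knBoard n).powersetCard (m n)).filter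
            (fun E => Tset A B ⊆ E)) = ∅ := by
          rw [Finset.eq_empty_iff_forall_notMem]
          intro E hE
          rw [Finset.mem_filter, Finset.mem_powersetCard] at hE
          have := Finset.card_le_card hE.2
          rw [hTcard, hE.1.2] at this
          omega
        simp only [hempty, Finset.card_empty, Nat.cast_zero]
        positivity
    have hpairscard : (pairs.card : ℝ) ≤ (n : ℝ) ^ l * 2 ^ n := by
      have h1 : pairs.card ≤ n.choose l * n.choose (q n) := by
        rw [hpairs]
        calc (((Finset.univ.powersetCard l) ×ˢ (Finset.univ.powersetCard (q n))).filter
              (fun AB : Finset (Fin n) × Finset (Fin n) => Disjoint AB.1 AB.2)).card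
            ≤ ((Finset.univ.powersetCard l) ×ˢ (Finset.univ.powersetCard (q n))).card :=
              Finset.card_filter_le _ _
          _ = n.choose l * n.choose (q n) := by
              simp [Finset.card_powersetCard]
      have h2 : n.choose l * n.choose (q n) ≤ n ^ l * 2 ^ n :=
        Nat.mul_le_mul (Nat.choose_le_pow n l) (aux_choose_two_pow n (q n))
      calc (pairs.card : ℝ) ≤ ((n ^ l * 2 ^ n : ℕ) : ℝ) := by exact_mod_cast h1.trans h2
        _ = (n : ℝ) ^ l * 2 ^ n := by push_cast; ring
    have hpow : p ^ k ≤ p ^ (ε / 8 * (n : ℝ) * (l : ℝ)) := by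
      rw [← Real.rpow_natCast p k]
      apply Real.rpow_le_rpow_of_exponent_ge hp0 hp1.le
      have hql : ε / 8 * (n : ℝ) ≤ (q n : ℝ) := by rw [hq n]; exact Nat.le_ceil _
      have : ε / 8 * (n : ℝ) * (l : ℝ) ≤ (q n : ℝ) * (l : ℝ) := by
        apply mul_le_mul_of_nonneg_right hql (Nat.cast_nonneg l)
      calc ε / 8 * (n : ℝ) * (l : ℝ) ≤ (q n : ℝ) * (l : ℝ) := this
        _ = ((l * q n : ℕ) : ℝ) := by push_cast; ring
    have hcount : ((Finset.univ.filter P).card : ℝ)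
        ≤ (n : ℝ) ^ l * 2 ^ n * p ^ (ε / 8 * (n : ℝ) * (l : ℝ)) * (N.choose (m n) : ℝ) := by
      have h1 : (Finset.univ.filter P).card ≤
          ∑ AB ∈ pairs, (((knBoard n).powersetCard (m n)).filter
            (fun E => Tset AB.1 AB.2 ⊆ E)).card :=
        (Finset.card_le_card hsub).trans (Finset.card_biUnion_le)
      have h2 : ((Finset.univ.filter P).card : ℝ) ≤
          ∑ AB ∈ pairs, ((((knBoard n).powersetCard (m n)).filter
            (fun E => Tset AB.1 AB.2 ⊆ E)).card : ℝ) := by exact_mod_cast h1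
      have h3 : ∑ AB ∈ pairs, ((((knBoard n).powersetCard (m n)).filter
            (fun E => Tset AB.1 AB.2 ⊆ E)).card : ℝ)
          ≤ pairs.card * (p ^ k * (N.choose (m n) : ℝ)) := by
        rw [← nsmul_eq_mul]
        exact Finset.sum_le_card_nsmul _ _ _ hperpair
      have hpk : (0:ℝ) ≤ p ^ k := by positivity
      have hrpow0 : (0:ℝ) ≤ p ^ (ε / 8 * (n : ℝ) * (l : ℝ)) := Real.rpow_nonneg hp0.le _
      calc ((Finset.univ.filter P).card : ℝ)
          ≤ pairs.card * (p ^ k * (N.choose (m n) : ℝ)) := h2.trans h3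
        _ ≤ ((n : ℝ) ^ l * 2 ^ n) * (p ^ k * (N.choose (m n) : ℝ)) := by
            apply mul_le_mul_of_nonneg_right hpairscard (by positivity)
        _ ≤ ((n : ℝ) ^ l * 2 ^ n) * (p ^ (ε / 8 * (n : ℝ) * (l : ℝ)) * (N.choose (m n) : ℝ)) := by
            apply mul_le_mul_of_nonneg_left _ (by positivity)
            exact mul_le_mul_of_nonneg_right hpow hdpos.le
        _ = (n : ℝ) ^ l * 2 ^ n * p ^ (ε / 8 * (n : ℝ) * (l : ℝ)) * (N.choose (m n) : ℝ) := by
            ring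
    rw [hnum, hdenom]
    rw [div_le_iff₀ hdpos]
    exact hcount
  · -- tendsto
    set c : ℝ := ε / 8 * l with hc
    set r : ℝ := 2 * p ^ c with hr
    have hpc : p ^ c ≤ Real.exp (-1) := by
      rw [Real.rpow_def_of_pos hp0]
      apply Real.exp_le_exp.2
      have : Real.log (1 / p) = -Real.log p := by rw [one_div, Real.log_inv]
      nlinarith [hcL, this]
    have hr1 : r < 1 := by
      have h2e : (2 : ℝ) < Real.exp 1 := by
        have := Real.exp_one_gt_d9; linarith
      have hx : Real.exp (-1) * Real.exp 1 = 1 := by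
        rw [← Real.exp_add]; norm_num
      have he : Real.exp (-1) < 1 / 2 := by
        nlinarith [Real.exp_pos (-1)]
      rw [hr]
      linarith
    have hr0 : 0 ≤ r := by positivity
    have := tendsto_pow_const_mul_const_pow_of_lt_one l hr0 hr1
    apply this.congr
    intro n
    rw [hr, mul_pow, ← Real.rpow_natCast (p ^ c) n, ← Real.rpow_mul hp0.le]
    rw [show c * n = ε / 8 * (n : ℝ) * (l : ℝ) by rw [hc]; ring]
    ring
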